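/- An update of a routing table can only increase its quality: for any routing table rt containing an entry for destination dip, and any valid route r (i.e., the validity flag of r is 'valid', its sequence number is 0 iff its sequence-number-status flag is 'unknown', and if the status flag is 'unknown' then its hop count is 1), one has rt ⊑_dip update(rt, r), where update is the AODV routing table update function. -/

import Mathlib

/-- IP addresses / node identifiers. -/
abbrev IP := ℕ

/-- Increment of sequence numbers: `inc n = n+1` for `n ≠ 0`, `inc 0 = 0`. -/
def inc (n : ℕ) : ℕ := if n = 0 then 0 else n + 1

/-- Data of a routing table entry (besides its destination):
sequence number, sequence-number-status flag (`true` = known),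
validity flag (`true` = valid), hop count, next hop, precursors. -/
structure Route where
  dsn : ℕ
  known : Bool
  valid : Bool
  hops : ℕ
  nhip : IP
  pre : Set IP

/-- A routing table: at most one entry per destination. -/
abbrev RT := IP → Option Route

/-- Destination sequence number (0 if no entry). -/
def sqn (rt : RT) (dip : IP) : ℕ := (rt dip).elim 0 Route.dsn

/-- Hop count of the entry for `dip` (0 if no entry; only used where defined). -/
def dhops (rt : RT) (dip : IP) : ℕ := (rt dip).elim 0 Route.hops

/-- Next hop of the entry for `dip` (0 if no entry; only used where defined). -/
def nhop (rt : RT) (dip : IP) : IP := (rt dip).elim 0 Route.nhip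

/-- Net sequence number. -/
def nsqn (rt : RT) (dip : IP) : ℕ :=
  match rt dip with
  | none => 0
  | some r => if r.valid then r.dsn else r.dsn - 1

/-- Quality preorder on routing tables w.r.t. destination `dip`. -/
def rtord (dip : IP) (rt rt' : RT) : Prop :=
  nsqn rt dip < nsqn rt' dip ∨
    (nsqn rt dip = nsqn rt' dip ∧ dhops rt dip ≥ dhops rt' dip)

/-- Induced equivalence. -/
def rtequiv (dip : IP) (rt rt' : RT) : Prop := rtord dip rt rt' ∧ rtord dip rt' rt

/-- Strict quality order. -/
def rtsord (dip : IP) (rt rt' : RT) : Prop := rtord dip rt rt' ∧ ¬ rtequiv dip rt rt'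

/-- Add precursors to a route. -/
def addpre (r : Route) (npre : Set IP) : Route := { r with pre := r.pre ∪ npre }

/-- Add precursors to the entry for destination `d` of a routing table. -/
def addprecRT (rt : RT) (d : IP) (npre : Set IP) : RT :=
  fun x => if x = d then (rt d).map (fun r => addpre r npre) else rt x

/-- The AODV routing table update function: update `rt` with a route to
destination `dip` whose remaining data is `r`. -/
def update (rt : RT) (dip : IP) (r : Route) : RT :=
  fun d =>
    if d = dip then
      match rt dip with
      | none => some r
      | some s =>
        if s.dsn < r.dsn ∨ (s.dsn = r.dsn ∧ (s.hops > r.hops ∨ s.valid = false)) then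
          some (addpre r s.pre)
        else if r.known = false then
          some { addpre r s.pre with dsn := s.dsn }
        else
          some (addpre s r.pre)
    else rt d

/-- Invalidate the routes listed in the partial function `dests`, copying
the sequence numbers from `dests`. -/
def invalidate (rt : RT) (dests : IP → Option ℕ) : RT :=
  fun d =>
    match rt d, dests d with
    | some r, some rsn => some { r with dsn := rsn, valid := false }
    | o, _ => o

/-- The set of known destinations of a routing table. -/
def kD (rt : RT) : Set IP := { d | (rt d).isSome }

/-- An update can only increase the quality of a routing table. -/
theorem quality_update (rt : RT) (dip d : IP) (r : Route)
    (hdip : (rt dip).isSome)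
    (hhops1 : ∀ d' r', rt d' = some r' → 1 ≤ r'.hops)
    (hval : r.valid = true)
    (hsqn : r.dsn = 0 ↔ r.known = false)
    (hunk : r.known = false → r.hops = 1) :
    rtord dip rt (update rt d r) := by
  by_cases hd : dip = d
  · subst hd
    obtain ⟨s, hs⟩ := Option.isSome_iff_exists.mp hdip
    have hs1 : 1 ≤ s.hops := hhops1 dip s hs
    by_cases h1 : s.dsn < r.dsn ∨ (s.dsn = r.dsn ∧ (s.hops > r.hops ∨ s.valid = false))
    · have key : update rt dip r dip = some (addpre r s.pre) := by
        simp only [update, hs, if_pos h1, if_true, eq_self_iff_true]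
      unfold rtord nsqn dhops
      rw [key, hs]
      simp only [Option.elim, addpre]
      simp only [hval, eq_self_iff_true, if_true, ↓reduceIte]
      rcases Bool.eq_false_or_eq_true s.valid with hv | hv
      · rw [if_pos hv]
        rw [hv] at h1
        simp only [Bool.true_eq_false, or_false] at h1
        omega
      · rw [if_neg (by simp [hv])]
        rcases Nat.eq_zero_or_pos r.dsn with h0 | h0
        · have hh := hunk (hsqn.mp h0)
          omega
        · omega
    · push_neg at h1
      obtain ⟨hlt, himp⟩ := h1
      have hne : ¬(s.dsn < r.dsn ∨ (s.dsn = r.dsn ∧ (s.hops > r.hops ∨ s.valid = false))) := by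
        push_neg; exact ⟨hlt, himp⟩
      by_cases hk : r.known = false
      · have key : update rt dip r dip = some { addpre r s.pre with dsn := s.dsn } := by
          simp only [update, hs, if_neg hne, if_pos hk, if_true, eq_self_iff_true]
        have hr0 : r.dsn = 0 := hsqn.mpr hk
        have hrh : r.hops = 1 := hunk hk
        unfold rtord nsqn dhops
        rw [key, hs]
        simp only [Option.elim, addpre]
        simp only [hval, eq_self_iff_true, if_true, ↓reduceIte]
        rcases Bool.eq_false_or_eq_true s.valid with hv | hv
        · rw [if_pos hv]
          omega
        · rw [if_neg (by simp [hv])]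
          have hne' : s.dsn ≠ r.dsn := fun h => (himp h).2 hv
          omega
      · have key : update rt dip r dip = some (addpre s r.pre) := by
          simp only [update, hs, if_neg hne, if_neg hk, if_true, eq_self_iff_true]
        unfold rtord nsqn dhops
        rw [key, hs]
        simp only [Option.elim, addpre]
        right; exact ⟨rfl, le_refl _⟩
  · have key : update rt d r dip = rt dip := by
      unfold update; rw [if_neg hd]
    unfold rtord nsqn dhops
    rw [key]
    right; exact ⟨rfl, le_refl _⟩
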